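/- Let G=(V,E) be a polytree and i,j∈V. If there is no 2-trek between i and j, then the variable s_{ij} belongs to the third-order moment ideal I^{≤3}(G); moreover, for every k∈V such that there is no 3-trek between i, j and k, the variable t_{ijk} belongs to I^{≤3}(G). -/

import Mathlib

open MvPolynomial Matrix Finset

namespace LNG

variable {n : ℕ}

/-- A directed path in the directed graph `E`, recorded as the (nonempty) list of
visited vertices. -/
def IsDiPath (E : Fin n → Fin n → Prop) : List (Fin n) → Prop
  | [] => False
  | [_] => True
  | a :: b :: l => E a b ∧ IsDiPath E (b :: l)

/-- `p` is a directed path from `v` to `i` (possibly of length zero). -/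
def IsPathFromTo (E : Fin n → Fin n → Prop) (v : Fin n) (p : List (Fin n)) (i : Fin n) : Prop :=
  IsDiPath E p ∧ p.head? = some v ∧ p.getLast? = some i

/-- A `k`-trek with top `v` between the vertices `i 0, …, i (k-1)`: an ordered collection
of directed paths with common source `v`, where the `r`-th path has sink `i r`. -/
def IsTrek (E : Fin n → Fin n → Prop) {k : ℕ} (v : Fin n)
    (P : Fin k → List (Fin n)) (i : Fin k → Fin n) : Prop :=
  ∀ r, IsPathFromTo E v (P r) (i r)

/-- A simple `k`-trek: the top is the only vertex lying on all `k` paths. -/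
def IsSimpleTrek (E : Fin n → Fin n → Prop) {k : ℕ} (v : Fin n)
    (P : Fin k → List (Fin n)) (i : Fin k → Fin n) : Prop :=
  IsTrek E v P i ∧ ∀ w : Fin n, (∀ r, w ∈ P r) → w = v

/-- A 2-trek with top `v` between `i` and `j`. -/
def IsTrek2 (E : Fin n → Fin n → Prop) (v : Fin n) (p q : List (Fin n)) (i j : Fin n) : Prop :=
  IsPathFromTo E v p i ∧ IsPathFromTo E v q j

def IsSimpleTrek2 (E : Fin n → Fin n → Prop) (v : Fin n) (p q : List (Fin n))
    (i j : Fin n) : Prop :=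
  IsTrek2 E v p q i j ∧ ∀ w : Fin n, w ∈ p → w ∈ q → w = v

/-- A 3-trek with top `v` between `i`, `j` and `k`. -/
def IsTrek3 (E : Fin n → Fin n → Prop) (v : Fin n) (p q r : List (Fin n))
    (i j k : Fin n) : Prop :=
  IsPathFromTo E v p i ∧ IsPathFromTo E v q j ∧ IsPathFromTo E v r k

def IsSimpleTrek3 (E : Fin n → Fin n → Prop) (v : Fin n) (p q r : List (Fin n))
    (i j k : Fin n) : Prop :=
  IsTrek3 E v p q r i j k ∧ ∀ w : Fin n, w ∈ p → w ∈ q → w ∈ r → w = v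

def Trek2Exists (E : Fin n → Fin n → Prop) (i j : Fin n) : Prop :=
  ∃ v p q, IsTrek2 E v p q i j

def Trek3Exists (E : Fin n → Fin n → Prop) (i j k : Fin n) : Prop :=
  ∃ v p q r, IsTrek3 E v p q r i j k

/-- The underlying undirected (simple) graph of the directed graph `E`. -/
def underlying (E : Fin n → Fin n → Prop) : SimpleGraph (Fin n) where
  Adj a b := a ≠ b ∧ (E a b ∨ E b a)
  symm := ⟨fun a b h => ⟨h.1.symm, h.2.symm⟩⟩
  loopless := ⟨fun a h => h.1 rfl⟩

/-- A polytree: a topologically ordered DAG whose underlying undirected graph is a tree. -/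
def IsPolytree (E : Fin n → Fin n → Prop) : Prop :=
  (∀ i j : Fin n, E i j → i < j) ∧ (underlying E).IsTree

/-! ### Variables of the moment polynomial ring -/

abbrev SIdx (n : ℕ) := {p : Fin n × Fin n // p.1 ≤ p.2}
abbrev TIdx (n : ℕ) := {p : Fin n × Fin n × Fin n // p.1 ≤ p.2.1 ∧ p.2.1 ≤ p.2.2}

/-- Variables `s_{ij}` (`1 ≤ i ≤ j ≤ n`) and `t_{ijk}` (`1 ≤ i ≤ j ≤ k ≤ n`). -/
abbrev MomVar (n : ℕ) := SIdx n ⊕ TIdx n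

/-- Parameter variables `a_i`, `b_i` (`i ∈ V`) and `λ_{ij}`. -/
abbrev PVar (n : ℕ) := (Fin n ⊕ Fin n) ⊕ Fin n × Fin n

/-- Median of three. -/
def mid3 (i j k : Fin n) : Fin n := max (min i j) (min (max i j) k)

lemma min3_le_mid3 (i j k : Fin n) : min i (min j k) ≤ mid3 i j k :=
  le_trans (le_min (min_le_left _ _) (le_trans (min_le_right i (min j k)) (min_le_left j k)))
    (le_max_left _ _)

lemma mid3_le_max3 (i j k : Fin n) : mid3 i j k ≤ max i (max j k) :=
  max_le (le_trans (min_le_left i j) (le_max_left _ _))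
    (le_trans (min_le_right (max i j) k) (le_trans (le_max_right j k) (le_max_right i _)))

/-- The variable `s_{ij}` (indices sorted). -/
noncomputable def svar (i j : Fin n) : MvPolynomial (MomVar n) ℝ :=
  X (Sum.inl ⟨(min i j, max i j), min_le_max⟩)

/-- The variable `t_{ijk}` (indices sorted). -/
noncomputable def tvar (i j k : Fin n) : MvPolynomial (MomVar n) ℝ :=
  X (Sum.inr ⟨(min i (min j k), mid3 i j k, max i (max j k)),
      min3_le_mid3 i j k, mid3_le_max3 i j k⟩)

/-- Evaluation of the moment variables at a concrete pair `(S, T)`. -/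
def evalVar (S : Matrix (Fin n) (Fin n) ℝ) (T : Fin n → Fin n → Fin n → ℝ) :
    MomVar n → ℝ
  | Sum.inl p => S p.1.1 p.1.2
  | Sum.inr p => T p.1.1 p.1.2.1 p.1.2.2

/-! ### The third-order moment model -/

/-- `Λ ∈ ℝ^E`. -/
def Supported (E : Fin n → Fin n → Prop) (Λ : Matrix (Fin n) (Fin n) ℝ) : Prop :=
  ∀ i j, ¬ E i j → Λ i j = 0

/-- Covariance matrix `(I-Λ)^{-T} Ω⁽²⁾ (I-Λ)^{-1}`. -/
noncomputable def momentS (Λ : Matrix (Fin n) (Fin n) ℝ) (ω2 : Fin n → ℝ) :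
    Matrix (Fin n) (Fin n) ℝ :=
  ((1 - Λ)⁻¹)ᵀ * Matrix.diagonal ω2 * (1 - Λ)⁻¹

/-- Third moment tensor `Ω⁽³⁾ ∙ (I-Λ)^{-1} ∙ (I-Λ)^{-1} ∙ (I-Λ)^{-1}`. -/
noncomputable def momentT (Λ : Matrix (Fin n) (Fin n) ℝ) (ω3 : Fin n → ℝ)
    (i j k : Fin n) : ℝ :=
  ∑ a, ω3 a * (1 - Λ)⁻¹ a i * (1 - Λ)⁻¹ a j * (1 - Λ)⁻¹ a k

/-- Membership in the third-order moment model `M^{≤3}(G)`. -/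
def MomentModel (E : Fin n → Fin n → Prop)
    (S : Matrix (Fin n) (Fin n) ℝ) (T : Fin n → Fin n → Fin n → ℝ) : Prop :=
  ∃ (Λ : Matrix (Fin n) (Fin n) ℝ) (ω2 ω3 : Fin n → ℝ),
    Supported E Λ ∧ (∀ i, 0 < ω2 i) ∧ S = momentS Λ ω2 ∧ T = momentT Λ ω3

/-- The third-order moment (vanishing) ideal `I^{≤3}(G)`. -/
noncomputable def momentIdeal (E : Fin n → Fin n → Prop) : Ideal (MvPolynomial (MomVar n) ℝ) where
  carrier := {f | ∀ S T, MomentModel E S T → eval (evalVar S T) f = 0}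
  add_mem' := by
    intro f g hf hg S T h
    simp [map_add, hf S T h, hg S T h]
  zero_mem' := by
    intro S T h
    simp
  smul_mem' := by
    intro c f hf S T h
    simp [smul_eq_mul, _root_.map_mul, hf S T h]

/-- A fully symmetric 3-tensor. -/
def SymTensor3 (T : Fin n → Fin n → Fin n → ℝ) : Prop :=
  ∀ i j k : Fin n, T i j k = T j i k ∧ T i j k = T i k j

/-! ### Trek matrices and their minors -/

/-- `top(i,k) = top(j,k)`: there is a common vertex `v` that is the top of the
simple 2-treks between `i,k` and between `j,k`. -/
def SameTop2 (E : Fin n → Fin n → Prop) (i j k : Fin n) : Prop :=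
  ∃ v, (∃ p q, IsSimpleTrek2 E v p q i k) ∧ (∃ p q, IsSimpleTrek2 E v p q j k)

/-- `top(i,l,m) = top(j,l,m)`. -/
def SameTop3 (E : Fin n → Fin n → Prop) (i j l m : Fin n) : Prop :=
  ∃ v, (∃ p q r, IsSimpleTrek3 E v p q r i l m) ∧ (∃ p q r, IsSimpleTrek3 E v p q r j l m)

/-- `f` is a `2 × 2` minor of the trek-matrix `A_{i,j}`. -/
def IsTrekMinorOf (E : Fin n → Fin n → Prop) (i j : Fin n)
    (f : MvPolynomial (MomVar n) ℝ) : Prop :=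
  (∃ k k', SameTop2 E i j k ∧ SameTop2 E i j k' ∧
      f = svar i k * svar j k' - svar j k * svar i k') ∨
  (∃ k l m, SameTop2 E i j k ∧ SameTop3 E i j l m ∧
      f = svar i k * tvar j l m - svar j k * tvar i l m) ∨
  (∃ l m l' m', SameTop3 E i j l m ∧ SameTop3 E i j l' m' ∧
      f = tvar i l m * tvar j l' m' - tvar j l m * tvar i l' m')

/-- Variables `s_{ij}` with no 2-trek between `i,j` and `t_{ijk}` with no 3-trek. -/
def noTrekVars (E : Fin n → Fin n → Prop) : Set (MvPolynomial (MomVar n) ℝ) :=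
  {f | (∃ i j, ¬ Trek2Exists E i j ∧ f = svar i j) ∨
       (∃ i j k, ¬ Trek3Exists E i j k ∧ f = tvar i j k)}

/-- The 2-minors of the trek-matrices `A_{i,j}` over edges `i → j` of `G`. -/
def edgeMinors (E : Fin n → Fin n → Prop) : Set (MvPolynomial (MomVar n) ℝ) :=
  {f | ∃ i j, E i j ∧ IsTrekMinorOf E i j f}

/-- The 2-minors of all trek-matrices `A_{i,j}`. -/
def allMinors (E : Fin n → Fin n → Prop) : Set (MvPolynomial (MomVar n) ℝ) :=
  {f | ∃ i j, Trek2Exists E i j ∧ IsTrekMinorOf E i j f}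

/-! ### The simple trek rule parametrization -/

/-- Product of the edge weights `w` along a path. -/
def pathProd {R : Type*} [CommSemiring R] (w : Fin n → Fin n → R) : List (Fin n) → R
  | [] => 1
  | [_] => 1
  | a :: b :: l => w a b * pathProd w (b :: l)

/-- Sum of a weight over all simple 2-treks between `i` and `j`. -/
noncomputable def trekSum2 {M : Type*} [AddCommMonoid M] (E : Fin n → Fin n → Prop)
    (wt : Fin n → List (Fin n) → List (Fin n) → M) (i j : Fin n) : M :=
  ∑ᶠ τ : {x : Fin n × List (Fin n) × List (Fin n) //
      IsSimpleTrek2 E x.1 x.2.1 x.2.2 i j}, wt τ.1.1 τ.1.2.1 τ.1.2.2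

/-- Sum of a weight over all simple 3-treks between `i`, `j` and `k`. -/
noncomputable def trekSum3 {M : Type*} [AddCommMonoid M] (E : Fin n → Fin n → Prop)
    (wt : Fin n → List (Fin n) → List (Fin n) → List (Fin n) → M) (i j k : Fin n) : M :=
  ∑ᶠ τ : {x : Fin n × List (Fin n) × List (Fin n) × List (Fin n) //
      IsSimpleTrek3 E x.1 x.2.1 x.2.2.1 x.2.2.2 i j k},
    wt τ.1.1 τ.1.2.1 τ.1.2.2.1 τ.1.2.2.2

/-- The `(i,j)` coordinate of the simple trek rule parametrization `φ_G^*` (covariances). -/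
noncomputable def phiS (E : Fin n → Fin n → Prop) (a : Fin n → ℝ)
    (Λ : Matrix (Fin n) (Fin n) ℝ) (i j : Fin n) : ℝ :=
  trekSum2 E (fun v p q => a v * (pathProd (fun x y => Λ x y) p * pathProd (fun x y => Λ x y) q)) i j

/-- The `(i,j,k)` coordinate of the simple trek rule parametrization `φ_G^*` (third moments). -/
noncomputable def phiT (E : Fin n → Fin n → Prop) (b : Fin n → ℝ)
    (Λ : Matrix (Fin n) (Fin n) ℝ) (i j k : Fin n) : ℝ :=
  trekSum3 E (fun v p q r => b v * (pathProd (fun x y => Λ x y) p *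
    pathProd (fun x y => Λ x y) q * pathProd (fun x y => Λ x y) r)) i j k

/-- The ring homomorphism `φ_G` of the simple trek rule. -/
noncomputable def phiG (E : Fin n → Fin n → Prop) :
    MvPolynomial (MomVar n) ℝ →ₐ[ℝ] MvPolynomial (PVar n) ℝ :=
  aeval fun v => match v with
    | Sum.inl p => trekSum2 E (fun v' pl ql =>
        X (Sum.inl (Sum.inl v')) * (pathProd (fun x y => X (Sum.inr (x, y))) pl *
          pathProd (fun x y => X (Sum.inr (x, y))) ql)) p.1.1 p.1.2
    | Sum.inr p => trekSum3 E (fun v' pl ql rl =>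
        X (Sum.inl (Sum.inr v')) * (pathProd (fun x y => X (Sum.inr (x, y))) pl *
          pathProd (fun x y => X (Sum.inr (x, y))) ql *
          pathProd (fun x y => X (Sum.inr (x, y))) rl)) p.1.1 p.1.2.1 p.1.2.2



lemma pow_entry_path (E : Fin n → Fin n → Prop) (Λ : Matrix (Fin n) (Fin n) ℝ)
    (hsupp : Supported E Λ) (hlt : ∀ a b, E a b → a < b) :
    ∀ (k : ℕ) (a i : Fin n), (Λ ^ k) a i ≠ 0 →
      a.val + k ≤ i.val ∧ ∃ p, IsPathFromTo E a p i := by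
  intro k
  induction k with
  | zero =>
    intro a i h
    rw [pow_zero] at h
    have hai : a = i := by
      by_contra hne
      exact h (Matrix.one_apply_ne hne)
    subst hai
    exact ⟨by omega, ⟨[a], trivial, rfl, rfl⟩⟩
  | succ k ih =>
    intro a i h
    rw [pow_succ', Matrix.mul_apply] at h
    obtain ⟨b, -, hb⟩ := Finset.exists_ne_zero_of_sum_ne_zero h
    rw [mul_ne_zero_iff] at hb
    have hEab : E a b := by
      by_contra hne
      exact hb.1 (hsupp a b hne)
    obtain ⟨hle, p, hdp, hhd, hlast⟩ := ih b i hb.2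
    cases p with
    | nil => simp at hhd
    | cons b' t =>
      have hb' : b' = b := by simpa using hhd
      subst hb'
      refine ⟨?_, a :: b' :: t, ⟨hEab, hdp⟩, rfl, ?_⟩
      · have h2 : a.val < b'.val := hlt a b' hEab
        omega
      · simpa [List.getLast?_cons_cons] using hlast

lemma inv_entry_path (E : Fin n → Fin n → Prop) (Λ : Matrix (Fin n) (Fin n) ℝ)
    (hsupp : Supported E Λ) (hlt : ∀ a b, E a b → a < b) (a i : Fin n)
    (h : (1 - Λ)⁻¹ a i ≠ 0) : ∃ p, IsPathFromTo E a p i := by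
  have hnil : Λ ^ n = 0 := by
    ext x y
    simp only [Matrix.zero_apply]
    by_contra h0
    have h1 := (pow_entry_path E Λ hsupp hlt n x y h0).1
    have h2 := y.isLt
    omega
  have hinv : (1 - Λ)⁻¹ = ∑ k ∈ Finset.range n, Λ ^ k := by
    apply Matrix.inv_eq_left_inv
    have hg := geom_sum_mul Λ n
    rw [hnil] at hg
    have h1 : (∑ k ∈ Finset.range n, Λ ^ k) * (1 - Λ)
        = -((∑ k ∈ Finset.range n, Λ ^ k) * (Λ - 1)) := by
      rw [← mul_neg, neg_sub]
    rw [h1, hg]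
    simp
  rw [hinv, Matrix.sum_apply] at h
  obtain ⟨k, -, hk⟩ := Finset.exists_ne_zero_of_sum_ne_zero h
  exact (pow_entry_path E Λ hsupp hlt k a i hk).2

lemma eq_sorted3 (i j k : Fin n) :
    (i = min i (min j k) ∨ i = mid3 i j k ∨ i = max i (max j k)) ∧
    (j = min i (min j k) ∨ j = mid3 i j k ∨ j = max i (max j k)) ∧
    (k = min i (min j k) ∨ k = mid3 i j k ∨ k = max i (max j k)) := by
  rcases le_total i j with hij | hij <;> rcases le_total j k with hjk | hjk <;>
    rcases le_total i k with hik | hik <;>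
    simp [mid3, min_eq_left, min_eq_right, max_eq_left, max_eq_right,
      min_def, max_def, *] <;>
    omega

/-- If there is no 2-trek between `i` and `j` then `s_{ij} ∈ I^{≤3}(G)`,
and for every `k` with no 3-trek between `i,j,k`, also `t_{ijk} ∈ I^{≤3}(G)`. -/
theorem no_trek_vars_mem (n : ℕ) (E : Fin n → Fin n → Prop) (hG : IsPolytree E)
    (i j : Fin n) (h2 : ¬ Trek2Exists E i j) :
    svar i j ∈ momentIdeal E ∧
      ∀ k : Fin n, ¬ Trek3Exists E i j k → tvar i j k ∈ momentIdeal E := by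
  have hlt : ∀ a b : Fin n, E a b → a < b := hG.1
  constructor
  · intro S T hmod
    obtain ⟨Λ, ω2, ω3, hsupp, hpos, hS, hT⟩ := hmod
    have heval : eval (evalVar S T) (svar i j) = S (min i j) (max i j) := by
      simp [svar, evalVar]
    rw [heval, hS, momentS, Matrix.mul_apply]
    apply Finset.sum_eq_zero
    intro b _
    rw [Matrix.mul_diagonal, Matrix.transpose_apply]
    suffices hz : (1 - Λ)⁻¹ b (min i j) = 0 ∨ (1 - Λ)⁻¹ b (max i j) = 0 by
      rcases hz with hz | hz <;> simp [hz]
    by_contra hc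
    push_neg at hc
    obtain ⟨p, hp⟩ := inv_entry_path E Λ hsupp hlt b (min i j) hc.1
    obtain ⟨q, hq⟩ := inv_entry_path E Λ hsupp hlt b (max i j) hc.2
    rcases le_total i j with hij | hij
    · rw [min_eq_left hij] at hp
      rw [max_eq_right hij] at hq
      exact h2 ⟨b, p, q, hp, hq⟩
    · rw [min_eq_right hij] at hp
      rw [max_eq_left hij] at hq
      exact h2 ⟨b, q, p, hq, hp⟩
  · intro k h3 S T hmod
    obtain ⟨Λ, ω2, ω3, hsupp, hpos, hS, hT⟩ := hmod
    have heval : eval (evalVar S T) (tvar i j k)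
        = T (min i (min j k)) (mid3 i j k) (max i (max j k)) := by
      simp [tvar, evalVar]
    rw [heval, hT, momentT]
    apply Finset.sum_eq_zero
    intro a _
    suffices hz : (1 - Λ)⁻¹ a (min i (min j k)) = 0 ∨ (1 - Λ)⁻¹ a (mid3 i j k) = 0 ∨
        (1 - Λ)⁻¹ a (max i (max j k)) = 0 by
      rcases hz with hz | hz | hz <;> simp [hz]
    by_contra hc
    push_neg at hc
    have reach : ∀ x : Fin n,
        (x = min i (min j k) ∨ x = mid3 i j k ∨ x = max i (max j k)) →
        ∃ p, IsPathFromTo E a p x := by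
      rintro x (rfl | rfl | rfl)
      · exact inv_entry_path E Λ hsupp hlt a _ hc.1
      · exact inv_entry_path E Λ hsupp hlt a _ hc.2.1
      · exact inv_entry_path E Λ hsupp hlt a _ hc.2.2
    obtain ⟨hi, hj, hk⟩ := eq_sorted3 i j k
    obtain ⟨p, hp⟩ := reach i hi
    obtain ⟨q, hq⟩ := reach j hj
    obtain ⟨r, hr⟩ := reach k hk
    exact h3 ⟨a, p, q, r, hp, hq, hr⟩


end LNG
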